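/- In a two-player zero-sum game over n responses with payoff matrix Ψ_{ij} = Ψ(P(y_i ≻ y_j)), if Ψ satisfies Ψ(t) ≥ Ψ(1/2) for all t in [1/2,1] and Ψ(t) < Ψ(1/2) for all t in [0,1/2), and y_1 is a Condorcet winning response (P(y_1 ≻ y_i) > 1/2 for all i ≠ 1), then any Nash equilibrium (π₁*, π₂*) has π₁* = δ₁ (the point mass on y_1). -/
import Mathlib


open Finset

/-- A probability vector on `Fin n`. -/
def IsProb {n : ℕ} (π : Fin n → ℝ) : Prop := (∀ i, 0 ≤ π i) ∧ ∑ i, π i = 1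

/-- Expected payoff of the two-player game with payoff matrix `A`. -/
def payoff {n : ℕ} (A : Fin n → Fin n → ℝ) (π π' : Fin n → ℝ) : ℝ :=
  ∑ i, ∑ j, π i * π' j * A i j

/-- Nash equilibrium of the zero-sum game with payoff matrix `A`:
the first player maximizes, the second minimizes. -/
def IsNash {n : ℕ} (A : Fin n → Fin n → ℝ) (π₁ π₂ : Fin n → ℝ) : Prop :=
  IsProb π₁ ∧ IsProb π₂ ∧
  (∀ π, IsProb π → payoff A π π₂ ≤ payoff A π₁ π₂) ∧
  (∀ π', IsProb π' → payoff A π₁ π₂ ≤ payoff A π₁ π')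

theorem stmt_0 {n : ℕ} (P : Fin n → Fin n → ℝ) (Ψ : ℝ → ℝ)
    (hP01 : ∀ i j, 0 ≤ P i j ∧ P i j ≤ 1)
    (hPanti : ∀ i j, P i j + P j i = 1)
    (hΨge : ∀ t : ℝ, 1 / 2 ≤ t → t ≤ 1 → Ψ (1 / 2) ≤ Ψ t)
    (hΨlt : ∀ t : ℝ, 0 ≤ t → t < 1 / 2 → Ψ t < Ψ (1 / 2))
    (i₀ : Fin n)
    (hCond : ∀ i, i ≠ i₀ → 1 / 2 < P i₀ i)
    (π₁ π₂ : Fin n → ℝ)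
    (hNash : IsNash (fun i j => Ψ (P i j)) π₁ π₂) :
    π₁ = fun i => if i = i₀ then 1 else 0 := by
  obtain ⟨⟨h1pos, h1sum⟩, ⟨h2pos, h2sum⟩, hmax, hmin⟩ := hNash
  set A : Fin n → Fin n → ℝ := fun i j => Ψ (P i j) with hA
  have hPhalf : ∀ i, P i i = 1 / 2 := fun i => by have := hPanti i i; linarith
  have hAlt : ∀ i, i ≠ i₀ → A i i₀ < Ψ (1 / 2) := by
    intro i hi
    apply hΨlt
    · exact (hP01 i i₀).1
    · have := hPanti i₀ i; have := hCond i hi; linarith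
  have hAge : ∀ j, Ψ (1 / 2) ≤ A i₀ j := by
    intro j
    by_cases h : j = i₀
    · subst h; simp [hA, hPhalf]
    · exact hΨge _ (le_of_lt (hCond j h)) (hP01 i₀ j).2
  set δ : Fin n → ℝ := fun i => if i = i₀ then 1 else 0 with hδ
  have hδprob : IsProb δ := by
    constructor
    · intro i; dsimp [δ]; split <;> norm_num
    · simp [δ]
  have hpd : payoff A δ π₂ = ∑ j, π₂ j * A i₀ j := by
    unfold payoff
    rw [Finset.sum_eq_single i₀]
    · simp [δ]
    · intro b _ hb; simp [δ, hb]
    · simp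
  have hpd' : payoff A π₁ δ = ∑ i, π₁ i * A i i₀ := by
    unfold payoff
    apply Finset.sum_congr rfl
    intro i _
    rw [Finset.sum_eq_single i₀]
    · simp [δ]
    · intro b _ hb; simp [δ, hb]
    · simp
  have h1 : Ψ (1 / 2) ≤ payoff A δ π₂ := by
    rw [hpd]
    calc Ψ (1 / 2) = ∑ j, π₂ j * Ψ (1 / 2) := by rw [← Finset.sum_mul, h2sum, one_mul]
    _ ≤ ∑ j, π₂ j * A i₀ j :=
        Finset.sum_le_sum fun j _ => mul_le_mul_of_nonneg_left (hAge j) (h2pos j)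
  have h2 : Ψ (1 / 2) ≤ ∑ i, π₁ i * A i i₀ := by
    rw [← hpd']
    exact le_trans h1 (le_trans (hmax δ hδprob) (hmin δ hδprob))
  have hzero : ∀ i, i ≠ i₀ → π₁ i = 0 := by
    intro i hi
    by_contra hne
    have hpos : 0 < π₁ i := lt_of_le_of_ne (h1pos i) (Ne.symm hne)
    have hlt : ∑ k, π₁ k * A k i₀ < Ψ (1 / 2) := by
      calc ∑ k, π₁ k * A k i₀ < ∑ k, π₁ k * Ψ (1 / 2) := by
            apply Finset.sum_lt_sum
            · intro k _
              by_cases hk : k = i₀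
              · subst hk; simp [hA, hPhalf]
              · exact mul_le_mul_of_nonneg_left (le_of_lt (hAlt k hk)) (h1pos k)
            · exact ⟨i, Finset.mem_univ i, mul_lt_mul_of_pos_left (hAlt i hi) hpos⟩
        _ = Ψ (1 / 2) := by rw [← Finset.sum_mul, h1sum, one_mul]
    linarith
  have hone : π₁ i₀ = 1 := by
    have := h1sum
    rw [Finset.sum_eq_single i₀ (fun b _ hb => hzero b hb) (by simp)] at this
    exact this
  funext i
  by_cases h : i = i₀
  · subst h; simp [δ, hone]
  · simp [δ, h, hzero i h]
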